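/- (First-step OMP inequality with explicit bounds.) Let D be a convolutional dictionary with mutual coherence μ(D), let Γ ∈ ℝ^{mN} have support 𝒯 ≠ ∅, and let i₀ ∈ 𝒯 be an index at which |Γ| attains its maximum. Then the following two bounds hold for X = DΓ: (i) |⟨d_{i₀}, X⟩| ≥ |Γ_{i₀}| − |Γ_{i₀}|·(‖Γ‖_{0,∞} − 1)·μ(D); and (ii) for every j ∉ 𝒯, |⟨d_j, X⟩| ≤ |Γ_{i₀}|·‖Γ‖_{0,∞}·μ(D). -/

import Mathlib

open Finset

noncomputable section

attribute [local instance] Classical.propDecidable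

/-- The stripe index set `S i`: all column indices `(t, j)` whose shift position `t` lies in the
cyclic window `{i - n + 1, …, i + n - 1}` (mod `N`). -/
def stripeSet (N n m : ℕ) [NeZero N] (i : ZMod N) : Finset (ZMod N × Fin m) :=
  Finset.univ.filter (fun a =>
    ∃ s ∈ Finset.Icc (-(n : ℤ) + 1) ((n : ℤ) - 1), a.1 = i + (s : ZMod N))

/-- The number of nonzero entries of `Γ` in the `i`-th stripe. -/
def stripeNnz (N n m : ℕ) [NeZero N] (Γ : ZMod N × Fin m → ℝ) (i : ZMod N) : ℕ :=
  ((stripeSet N n m i).filter (fun a => Γ a ≠ 0)).card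

/-- The `ℓ_{0,∞}` norm of a global vector: the maximal number of nonzeros in a stripe. -/
def l0inf (N n m : ℕ) [NeZero N] (Γ : ZMod N × Fin m → ℝ) : ℕ :=
  Finset.univ.sup (fun i : ZMod N => stripeNnz N n m Γ i)

/-- Inner product of two columns of `D`. -/
def colInner {N m : ℕ} [NeZero N] (D : Matrix (ZMod N) (ZMod N × Fin m) ℝ)
    (a b : ZMod N × Fin m) : ℝ :=
  ∑ t, D t a * D t b

/-- The mutual coherence `μ(D)`: the maximal absolute inner product between distinct columns. -/
def mutualCoherence {N m : ℕ} [NeZero N] (D : Matrix (ZMod N) (ZMod N × Fin m) ℝ) : ℝ :=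
  sSup {x | ∃ a b : ZMod N × Fin m, a ≠ b ∧ x = |colInner D a b|}

/-- `D` is a convolutional dictionary: its columns are the cyclic shifts of the columns of a
local dictionary `D_L ∈ ℝ^{n×m}`, and all columns have unit `ℓ2` norm. -/
def IsConvDict (N n m : ℕ) [NeZero N] (D : Matrix (ZMod N) (ZMod N × Fin m) ℝ) : Prop :=
  (∃ DL : Fin n → Fin m → ℝ, ∀ (i t : ZMod N) (j : Fin m),
      D t (i, j) = if h : (t - i).val < n then DL ⟨(t - i).val, h⟩ j else 0) ∧
  ∀ a : ZMod N × Fin m, ∑ t, (D t a) ^ 2 = 1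

/-- The shifted mutual coherence `μ_s`: the maximal absolute inner product between a column at
shift position `i` and a column at shift position `i + s` (distinct columns when `s = 0`). -/
def shiftedMu {N m : ℕ} [NeZero N] (D : Matrix (ZMod N) (ZMod N × Fin m) ℝ) (s : ℤ) : ℝ :=
  sSup {x | ∃ (i : ZMod N) (j l : Fin m), (s = 0 → j ≠ l) ∧
    x = |colInner D (i, j) (i + (s : ZMod N), l)|}

/-- `n_{i,s}(Γ)`: the number of nonzeros of `Γ` in the local chunk at shift `s` of the
`i`-th stripe. -/
def shiftNnz (N m : ℕ) [NeZero N] (Γ : ZMod N × Fin m → ℝ) (i : ZMod N) (s : ℤ) : ℕ :=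
  (Finset.univ.filter (fun j : Fin m => Γ (i + (s : ZMod N), j) ≠ 0)).card

/-- The stripe coherence `ζ_i(Γ) = Σ_s n_{i,s}(Γ) · μ_s`. -/
def stripeCoherence (N n m : ℕ) [NeZero N] (D : Matrix (ZMod N) (ZMod N × Fin m) ℝ)
    (Γ : ZMod N × Fin m → ℝ) (i : ZMod N) : ℝ :=
  ∑ s ∈ Finset.Icc (-(n : ℤ) + 1) ((n : ℤ) - 1), (shiftNnz N m Γ i s : ℝ) * shiftedMu D s

/-- The Stripe-Spark `σ_∞(D)`: the least `ℓ_{0,∞}` norm of a nonzero vector in the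
null space of `D` (`⊤` if the null space is trivial). -/
def stripeSpark (N n m : ℕ) [NeZero N] (D : Matrix (ZMod N) (ZMod N × Fin m) ℝ) : ℕ∞ :=
  sInf {k : ℕ∞ | ∃ Δ : ZMod N × Fin m → ℝ, Δ ≠ 0 ∧ D.mulVec Δ = 0 ∧ (l0inf N n m Δ : ℕ∞) = k}

/-- The `ℓ1` norm of a global vector. -/
def l1norm {N m : ℕ} [NeZero N] (Γ : ZMod N × Fin m → ℝ) : ℝ :=
  ∑ a, |Γ a|

/-- First-step OMP inequality with explicit bounds: for `X = DΓ` and `i₀` an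
index of maximal magnitude of `Γ` over its support, (i) `|⟨d_{i₀}, X⟩|` is at least
`|Γ_{i₀}| - |Γ_{i₀}|(‖Γ‖_{0,∞} - 1)μ(D)`, and (ii) for every `j` outside the support,
`|⟨d_j, X⟩| ≤ |Γ_{i₀}| ‖Γ‖_{0,∞} μ(D)`. -/
lemma mu_nonneg' {N m : ℕ} [NeZero N] (D : Matrix (ZMod N) (ZMod N × Fin m) ℝ) :
    0 ≤ mutualCoherence D :=
  Real.sSup_nonneg (by rintro x ⟨a, b, -, rfl⟩; positivity)

lemma abs_colInner_le_mu' {N m : ℕ} [NeZero N] (D : Matrix (ZMod N) (ZMod N × Fin m) ℝ)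
    {a b : ZMod N × Fin m} (hab : a ≠ b) : |colInner D a b| ≤ mutualCoherence D := by
  have hbdd : BddAbove {x | ∃ a b : ZMod N × Fin m, a ≠ b ∧ x = |colInner D a b|} := by
    apply Set.Finite.bddAbove
    apply Set.Finite.subset (Set.finite_range
      fun p : (ZMod N × Fin m) × (ZMod N × Fin m) => |colInner D p.1 p.2|)
    rintro x ⟨a, b, -, rfl⟩
    exact ⟨(a, b), rfl⟩
  exact le_csSup hbdd ⟨a, b, hab, rfl⟩

lemma colInner_self' {N n m : ℕ} [NeZero N] {D : Matrix (ZMod N) (ZMod N × Fin m) ℝ}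
    (hD : IsConvDict N n m D) (a : ZMod N × Fin m) : colInner D a a = 1 := by
  have := hD.2 a
  simpa [colInner, sq] using this

lemma colInner_eq_zero_of_far' {N n m : ℕ} [NeZero N] {D : Matrix (ZMod N) (ZMod N × Fin m) ℝ}
    (hD : IsConvDict N n m D) (a b : ZMod N × Fin m)
    (h : ¬ ∃ s ∈ Finset.Icc (-(n : ℤ) + 1) ((n : ℤ) - 1), b.1 = a.1 + (s : ZMod N)) :
    colInner D a b = 0 := by
  obtain ⟨DL, hDL⟩ := hD.1
  apply Finset.sum_eq_zero
  intro t _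
  by_contra hne
  have h1 : D t a ≠ 0 := fun h0 => hne (by rw [h0, zero_mul])
  have h2 : D t b ≠ 0 := fun h0 => hne (by rw [h0, mul_zero])
  rw [show a = (a.1, a.2) from rfl, hDL a.1 t a.2] at h1
  rw [show b = (b.1, b.2) from rfl, hDL b.1 t b.2] at h2
  have hp : (t - a.1).val < n := by by_contra hc; simp [hc] at h1
  have hq : (t - b.1).val < n := by by_contra hc; simp [hc] at h2
  apply h
  refine ⟨((t - a.1).val : ℤ) - ((t - b.1).val : ℤ), ?_, ?_⟩
  · simp only [Finset.mem_Icc]; omega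
  · have : ((((t - a.1).val : ℤ) - ((t - b.1).val : ℤ) : ℤ) : ZMod N)
        = (t - a.1) - (t - b.1) := by
      push_cast [ZMod.natCast_val, ZMod.cast_id]
      ring
    rw [this]; ring

theorem omp_first_step_bounds (N n m : ℕ) [NeZero N]
    (hm : 1 ≤ m) (hn : 1 ≤ n) (hN : 2 * n - 1 ≤ N)
    (D : Matrix (ZMod N) (ZMod N × Fin m) ℝ) (hD : IsConvDict N n m D)
    (Γ : ZMod N × Fin m → ℝ)
    (i₀ : ZMod N × Fin m) (hi₀ : i₀ ∈ Function.support Γ)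
    (hmax : ∀ a ∈ Function.support Γ, |Γ a| ≤ |Γ i₀|) :
    |Γ i₀| - |Γ i₀| * ((l0inf N n m Γ : ℝ) - 1) * mutualCoherence D ≤
        |∑ t, D t i₀ * D.mulVec Γ t| ∧
      ∀ j ∉ Function.support Γ,
        |∑ t, D t j * D.mulVec Γ t| ≤
          |Γ i₀| * (l0inf N n m Γ : ℝ) * mutualCoherence D := by
  set μ := mutualCoherence D with hμdef
  have hμ0 : 0 ≤ μ := mu_nonneg' D
  set T : (ZMod N × Fin m) → Finset (ZMod N × Fin m) :=
    fun a => (stripeSet N n m a.1).filter (fun b => Γ b ≠ 0) with hT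
  have key : ∀ a : ZMod N × Fin m,
      ∑ t, D t a * D.mulVec Γ t = ∑ b ∈ T a, Γ b * colInner D a b := by
    intro a
    have h1 : ∑ t, D t a * D.mulVec Γ t = ∑ b, Γ b * colInner D a b := by
      simp only [Matrix.mulVec, dotProduct, Finset.mul_sum, colInner]
      rw [Finset.sum_comm]
      exact Finset.sum_congr rfl fun b _ => Finset.sum_congr rfl fun t _ => by ring
    rw [h1]
    symm
    apply Finset.sum_subset (Finset.subset_univ _)
    intro b _ hb
    by_cases hbs : b ∈ stripeSet N n m a.1
    · have hΓb : Γ b = 0 := by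
        by_contra hΓ
        exact hb (Finset.mem_filter.mpr ⟨hbs, hΓ⟩)
      rw [hΓb, zero_mul]
    · rw [colInner_eq_zero_of_far' hD a b ?_, mul_zero]
      intro hex
      apply hbs
      simp only [stripeSet, Finset.mem_filter, Finset.mem_univ, true_and]
      exact hex
  have hTcard : ∀ a : ZMod N × Fin m, (T a).card ≤ l0inf N n m Γ := by
    intro a
    exact Finset.le_sup (f := fun i => stripeNnz N n m Γ i) (Finset.mem_univ a.1)
  constructor
  · rw [key i₀]
    have hi₀T : i₀ ∈ T i₀ := by
      refine Finset.mem_filter.mpr ⟨?_, hi₀⟩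
      simp only [stripeSet, Finset.mem_filter, Finset.mem_univ, true_and]
      exact ⟨0, by simp only [Finset.mem_Icc]; omega, by simp⟩
    rw [← Finset.add_sum_erase _ _ hi₀T, colInner_self' hD, mul_one]
    set R := ∑ b ∈ (T i₀).erase i₀, Γ b * colInner D i₀ b with hR
    have h1 : 1 ≤ (T i₀).card := Finset.card_pos.mpr ⟨i₀, hi₀T⟩
    have h2 : (T i₀).card ≤ l0inf N n m Γ := hTcard i₀
    have hRbound : |R| ≤ |Γ i₀| * ((l0inf N n m Γ : ℝ) - 1) * μ := by
      calc |R| ≤ ∑ b ∈ (T i₀).erase i₀, |Γ b * colInner D i₀ b| :=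
            Finset.abs_sum_le_sum_abs _ _
        _ ≤ ∑ _b ∈ (T i₀).erase i₀, |Γ i₀| * μ := by
            apply Finset.sum_le_sum
            intro b hb
            have hbne : b ≠ i₀ := Finset.ne_of_mem_erase hb
            have hbmem : Γ b ≠ 0 := (Finset.mem_filter.mp (Finset.mem_of_mem_erase hb)).2
            rw [abs_mul]
            exact mul_le_mul (hmax b hbmem) (abs_colInner_le_mu' D (Ne.symm hbne))
              (abs_nonneg _) (abs_nonneg _)
        _ = (((T i₀).erase i₀).card : ℝ) * (|Γ i₀| * μ) := by
            rw [Finset.sum_const, nsmul_eq_mul]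
        _ ≤ ((l0inf N n m Γ : ℝ) - 1) * (|Γ i₀| * μ) := by
            apply mul_le_mul_of_nonneg_right _ (by positivity)
            rw [Finset.card_erase_of_mem hi₀T]
            calc (((T i₀).card - 1 : ℕ) : ℝ) ≤ ((l0inf N n m Γ - 1 : ℕ) : ℝ) :=
                  Nat.cast_le.mpr (by omega)
              _ = (l0inf N n m Γ : ℝ) - 1 := by rw [Nat.cast_sub (h1.trans h2)]; norm_num
        _ = |Γ i₀| * ((l0inf N n m Γ : ℝ) - 1) * μ := by ring
    have habs : |Γ i₀| - |R| ≤ |Γ i₀ + R| := by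
      have h := abs_add_le (Γ i₀ + R) (-R)
      rw [add_neg_cancel_right, abs_neg] at h
      linarith
    linarith
  · intro j hj
    have hΓj : Γ j = 0 := Function.notMem_support.mp hj
    rw [key j]
    calc |∑ b ∈ T j, Γ b * colInner D j b| ≤ ∑ b ∈ T j, |Γ b * colInner D j b| :=
          Finset.abs_sum_le_sum_abs _ _
      _ ≤ ∑ _b ∈ T j, |Γ i₀| * μ := by
          apply Finset.sum_le_sum
          intro b hb
          have hbmem : Γ b ≠ 0 := (Finset.mem_filter.mp hb).2
          have hbj : j ≠ b := fun h => hbmem (h ▸ hΓj)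
          rw [abs_mul]
          exact mul_le_mul (hmax b hbmem) (abs_colInner_le_mu' D hbj)
            (abs_nonneg _) (abs_nonneg _)
      _ = ((T j).card : ℝ) * (|Γ i₀| * μ) := by rw [Finset.sum_const, nsmul_eq_mul]
      _ ≤ (l0inf N n m Γ : ℝ) * (|Γ i₀| * μ) :=
          mul_le_mul_of_nonneg_right (Nat.cast_le.mpr (hTcard j)) (by positivity)
      _ = |Γ i₀| * (l0inf N n m Γ : ℝ) * μ := by ring


end
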